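/- arXiv:2306.06016 — 4 statements merged into one kernel-verified Lean document; each statement's English description precedes it below -/
import Mathlib

section
/- Convergence of initial data implies convergence of orbits but not conversely: (a) if xₙ → x in H then e^{·A} xₙ → e^{·A} x in L²(0,T;H) for any finite T; (b) there exist a Hilbert space H, a C₀-semigroup e^{tA} on H, T > 0, and a sequence (xₙ) in H with e^{·A} xₙ → 0 in L²(0,T;H) but xₙ not converging to 0 in H. -/
open MeasureTheory Filter ENNReal

noncomputable section Stmt5Aux

/-- The diagonal multiplier `e^{-k·max(t,0)}`. -/
def stmt5m (t : ℝ) (k : ℕ) : ℝ := Real.exp (-(k : ℝ) * max t 0)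

lemma stmt5m_pos (t : ℝ) (k : ℕ) : 0 < stmt5m t k := Real.exp_pos _

lemma stmt5m_le_one (t : ℝ) (k : ℕ) : stmt5m t k ≤ 1 := by
  apply Real.exp_le_one_iff.mpr
  have h1 : (0:ℝ) ≤ (k:ℝ) := Nat.cast_nonneg k
  have h2 : (0:ℝ) ≤ max t 0 := le_max_right _ _
  nlinarith

lemma stmt5m_continuous (k : ℕ) : Continuous fun t => stmt5m t k :=
  Real.continuous_exp.comp (continuous_const.mul (continuous_id.max continuous_const))

lemma stmt5m_zero (k : ℕ) : stmt5m 0 k = 1 := by simp [stmt5m]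

lemma stmt5m_add {s t : ℝ} (hs : 0 ≤ s) (ht : 0 ≤ t) (k : ℕ) :
    stmt5m (s + t) k = stmt5m s k * stmt5m t k := by
  rw [stmt5m, stmt5m, stmt5m, max_eq_left hs, max_eq_left ht, max_eq_left (by linarith),
    ← Real.exp_add]
  ring_nf

lemma stmt5_memℓp (t : ℝ) (f : lp (fun _ : ℕ => ℝ) 2) :
    Memℓp (fun k => stmt5m t k * f k) 2 := by
  apply memℓp_gen
  have hs : Summable fun k => ‖f k‖ ^ (2:ℝ≥0∞).toReal := (lp.memℓp f).summable (by norm_num)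
  apply hs.of_nonneg_of_le (fun k => by positivity)
  intro k
  apply Real.rpow_le_rpow (norm_nonneg _) ?_ (by positivity)
  rw [norm_mul]
  have h1 : ‖stmt5m t k‖ ≤ 1 := by
    rw [Real.norm_eq_abs, abs_of_pos (stmt5m_pos t k)]; exact stmt5m_le_one t k
  nlinarith [norm_nonneg (f k), norm_nonneg (stmt5m t k)]

/-- The diagonal linear map. -/
def stmt5L (t : ℝ) : lp (fun _ : ℕ => ℝ) 2 →ₗ[ℝ] lp (fun _ : ℕ => ℝ) 2 where
  toFun f := ⟨fun k => stmt5m t k * f k, stmt5_memℓp t f⟩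
  map_add' f g := by
    apply lp.ext
    funext k
    show stmt5m t k * (f + g) k = stmt5m t k * f k + stmt5m t k * g k
    rw [lp.coeFn_add]
    simp [mul_add]
  map_smul' c f := by
    apply lp.ext
    funext k
    show stmt5m t k * (c • f) k
      = (c • (⟨fun k => stmt5m t k * f k, stmt5_memℓp t f⟩ : lp (fun _ : ℕ => ℝ) 2)) k
    rw [lp.coeFn_smul, lp.coeFn_smul]
    simp only [Pi.smul_apply, smul_eq_mul]
    show stmt5m t k * (c * f k) = c * (stmt5m t k * f k)
    ring

lemma stmt5L_norm_le (t : ℝ) (f : lp (fun _ : ℕ => ℝ) 2) : ‖stmt5L t f‖ ≤ ‖f‖ := by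
  apply lp.norm_le_of_tsum_le (by norm_num) (norm_nonneg f)
  rw [lp.norm_rpow_eq_tsum (p := 2) (by norm_num) f]
  apply ((stmt5_memℓp t f).summable (by norm_num)).tsum_le_tsum _
    ((lp.memℓp f).summable (by norm_num))
  intro k
  apply Real.rpow_le_rpow (norm_nonneg _) ?_ (by positivity)
  show ‖stmt5m t k * f k‖ ≤ ‖f k‖
  rw [norm_mul]
  have h1 : ‖stmt5m t k‖ ≤ 1 := by
    rw [Real.norm_eq_abs, abs_of_pos (stmt5m_pos t k)]; exact stmt5m_le_one t k
  nlinarith [norm_nonneg (f k), norm_nonneg (stmt5m t k)]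

/-- The diagonal semigroup. -/
def stmt5S (t : ℝ) : lp (fun _ : ℕ => ℝ) 2 →L[ℝ] lp (fun _ : ℕ => ℝ) 2 :=
  (stmt5L t).mkContinuous 1 (fun f => by simpa using stmt5L_norm_le t f)

lemma stmt5S_apply (t : ℝ) (f : lp (fun _ : ℕ => ℝ) 2) (k : ℕ) :
    (stmt5S t f) k = stmt5m t k * f k := rfl

lemma stmt5S_zero : stmt5S 0 = 1 := by
  apply ContinuousLinearMap.ext
  intro f
  apply lp.ext
  funext k
  rw [show ((1 : lp (fun _ : ℕ => ℝ) 2 →L[ℝ] lp (fun _ : ℕ => ℝ) 2) f) = f from rfl]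
  show stmt5m 0 k * f k = f k
  rw [stmt5m_zero, one_mul]

lemma stmt5S_add {s t : ℝ} (hs : 0 ≤ s) (ht : 0 ≤ t) :
    stmt5S (s + t) = (stmt5S s).comp (stmt5S t) := by
  apply ContinuousLinearMap.ext
  intro f
  apply lp.ext
  funext k
  show stmt5m (s + t) k * f k = stmt5m s k * (stmt5S t f) k
  rw [stmt5S_apply, stmt5m_add hs ht, mul_assoc]

lemma stmt5S_cont (v : lp (fun _ : ℕ => ℝ) 2) : Continuous fun t => stmt5S t v := by
  rw [continuous_iff_continuousAt]
  intro t₀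
  rw [ContinuousAt, tendsto_iff_norm_sub_tendsto_zero]
  have hsum : Summable fun k => (v k) ^ 2 := by
    have hs : Summable fun k => ‖v k‖ ^ (2:ℝ≥0∞).toReal := (lp.memℓp v).summable (by norm_num)
    apply hs.congr
    intro k
    rw [show ((2:ℝ≥0∞).toReal) = ((2:ℕ):ℝ) by norm_num, Real.rpow_natCast]
    rw [Real.norm_eq_abs, sq_abs]
  have hD : Tendsto (fun t => ∑' k, ((stmt5m t k - stmt5m t₀ k) * v k) ^ 2) (nhds t₀)
      (nhds 0) := by
    have h0 : (0:ℝ) = ∑' _ : ℕ, (0:ℝ) := by simp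
    rw [h0]
    apply tendsto_tsum_of_dominated_convergence (bound := fun k => 4 * (v k) ^ 2)
      (hsum.mul_left 4)
    · intro k
      have hc : Continuous fun t => ((stmt5m t k - stmt5m t₀ k) * v k) ^ 2 :=
        (((stmt5m_continuous k).sub continuous_const).mul continuous_const).pow 2
      have := hc.tendsto t₀
      simpa using this
    · filter_upwards with t
      intro k
      rw [Real.norm_eq_abs, abs_of_nonneg (by positivity)]
      have h1 : |stmt5m t k - stmt5m t₀ k| ≤ 2 := by
        have := stmt5m_le_one t k; have := stmt5m_pos t k
        have := stmt5m_le_one t₀ k; have := stmt5m_pos t₀ k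
        rw [abs_le]; constructor <;> nlinarith
      have h2 : ((stmt5m t k - stmt5m t₀ k) * v k) ^ 2
          = (stmt5m t k - stmt5m t₀ k) ^ 2 * (v k) ^ 2 := by ring
      rw [h2]
      have h3 : (stmt5m t k - stmt5m t₀ k) ^ 2 ≤ 4 := by
        nlinarith [abs_nonneg (stmt5m t k - stmt5m t₀ k), sq_abs (stmt5m t k - stmt5m t₀ k)]
      nlinarith [sq_nonneg (v k), sq_nonneg (stmt5m t k - stmt5m t₀ k)]
  have hkey : ∀ t : ℝ, ‖stmt5S t v - stmt5S t₀ v‖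
      = Real.sqrt (∑' k, ((stmt5m t k - stmt5m t₀ k) * v k) ^ 2) := by
    intro t
    have h1 : ∑' k, ((stmt5m t k - stmt5m t₀ k) * v k) ^ 2
        = ‖stmt5S t v - stmt5S t₀ v‖ ^ 2 := by
      have h2 := lp.norm_rpow_eq_tsum (p := 2) (by norm_num) (stmt5S t v - stmt5S t₀ v)
      have h3 : ∀ k : ℕ, ((stmt5S t v - stmt5S t₀ v) k) = (stmt5m t k - stmt5m t₀ k) * v k := by
        intro k
        rw [lp.coeFn_sub, Pi.sub_apply, stmt5S_apply, stmt5S_apply]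
        ring
      rw [show ((2:ℝ≥0∞).toReal) = ((2:ℕ):ℝ) by norm_num] at h2
      simp only [Real.rpow_natCast] at h2
      rw [h2]
      apply tsum_congr
      intro k
      rw [h3 k, Real.norm_eq_abs, sq_abs]
    rw [h1, Real.sqrt_sq (norm_nonneg _)]
  have hfin := (Real.continuous_sqrt.tendsto 0).comp hD
  rw [Real.sqrt_zero] at hfin
  apply hfin.congr
  intro t
  exact (hkey t).symm

/-- The sequence of initial data. -/
def stmt5c (n : ℕ) : ℝ := Real.sqrt (Real.sqrt n)

lemma stmt5c_nonneg (n : ℕ) : 0 ≤ stmt5c n := Real.sqrt_nonneg _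

def stmt5x (n : ℕ) : lp (fun _ : ℕ => ℝ) 2 := lp.single 2 n (stmt5c n)

lemma stmt5S_single (t : ℝ) (n : ℕ) (a : ℝ) :
    stmt5S t (lp.single 2 n a) = lp.single 2 n (stmt5m t n * a) := by
  apply lp.ext
  funext k
  rw [stmt5S_apply]
  rcases eq_or_ne k n with rfl | h
  · rw [lp.single_apply_self, lp.single_apply_self]
  · rw [lp.single_apply_ne (E := fun _ : ℕ => ℝ) 2 n a h,
      lp.single_apply_ne (E := fun _ : ℕ => ℝ) 2 n _ h, mul_zero]

lemma stmt5_norm_single (a : ℝ) (n : ℕ) :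
    ‖lp.single (E := fun _ : ℕ => ℝ) 2 n a‖ = ‖a‖ := by
  have := lp.norm_single (E := fun _ : ℕ => ℝ) (p := 2) (by norm_num) n a
  simpa using this

lemma stmt5_orbit_norm (t : ℝ) (n : ℕ) :
    ‖stmt5S t (stmt5x n)‖ = stmt5m t n * stmt5c n := by
  rw [stmt5x, stmt5S_single, stmt5_norm_single, Real.norm_eq_abs,
    abs_of_nonneg (mul_nonneg (stmt5m_pos t n).le (stmt5c_nonneg n))]

lemma stmt5_scalar_bound {n : ℕ} (hn : 0 < n) :
    eLpNorm (fun t => stmt5m t n * stmt5c n) 2 ((volume : Measure ℝ).restrict (Set.Ioc 0 1))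
      ≤ ENNReal.ofReal (Real.sqrt (Real.sqrt n / (2 * n))) := by
  set c := stmt5c n with hc
  have hcn : 0 ≤ c := stmt5c_nonneg n
  rw [eLpNorm_eq_lintegral_rpow_enorm_toReal (by norm_num) (by norm_num)]
  have htR : ((2:ℝ≥0∞).toReal) = 2 := by norm_num
  rw [htR]
  have h1 : ∀ t : ℝ, ‖stmt5m t n * c‖ₑ ^ (2:ℝ)
      = ENNReal.ofReal ((stmt5m t n) ^ 2 * c ^ 2) := by
    intro t
    rw [← ofReal_norm_eq_enorm,
      ENNReal.ofReal_rpow_of_nonneg (norm_nonneg _) (by norm_num)]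
    congr 1
    rw [show (2:ℝ) = ((2:ℕ):ℝ) by norm_num, Real.rpow_natCast]
    rw [Real.norm_eq_abs, abs_mul, abs_of_pos (stmt5m_pos t n), abs_of_nonneg hcn]
    ring
  simp only [h1]
  have hcont : Continuous fun t : ℝ => (stmt5m t n) ^ 2 * c ^ 2 :=
    ((stmt5m_continuous n).pow 2).mul continuous_const
  have hint : Integrable (fun t : ℝ => (stmt5m t n) ^ 2 * c ^ 2)
      ((volume : Measure ℝ).restrict (Set.Ioc 0 1)) := hcont.integrableOn_Ioc
  have h2 := ofReal_integral_eq_lintegral_ofReal hint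
    (Filter.Eventually.of_forall fun t => by positivity)
  rw [← h2]
  have hb : (0:ℝ) < 2 * n := by positivity
  set b : ℝ := 2 * n with hbdef
  have h3 : ∫ t in Set.Ioc (0:ℝ) 1, (stmt5m t n) ^ 2 * c ^ 2
      = ∫ t in Set.Ioc (0:ℝ) 1, Real.sqrt n * Real.exp (-b * t) := by
    apply setIntegral_congr_fun measurableSet_Ioc
    intro t ht
    have hmax : max t 0 = t := max_eq_left ht.1.le
    have hc2 : c ^ 2 = Real.sqrt n := by rw [hc, stmt5c, Real.sq_sqrt (Real.sqrt_nonneg _)]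
    simp only [stmt5m]
    rw [hmax, hc2, pow_two, ← Real.exp_add]
    rw [show -(n:ℝ) * t + -(n:ℝ) * t = -b * t by rw [hbdef]; ring]
    ring
  rw [h3]
  have h4 : ∫ t in Set.Ioc (0:ℝ) 1, Real.sqrt n * Real.exp (-b * t)
      = Real.sqrt n / b - Real.sqrt n / b * Real.exp (-b) := by
    rw [← intervalIntegral.integral_of_le zero_le_one]
    have hderiv : ∀ t ∈ Set.uIcc (0:ℝ) 1,
        HasDerivAt (fun t => -(Real.sqrt n / b) * Real.exp (-b * t))
          (Real.sqrt n * Real.exp (-b * t)) t := by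
      intro t _
      have hd1 : HasDerivAt (fun t : ℝ => -b * t) (-b) t := by
        simpa using (hasDerivAt_id t).const_mul (-b)
      have hd2 := (Real.hasDerivAt_exp (-b * t)).comp t hd1
      have hd3 := hd2.const_mul (-(Real.sqrt n / b))
      exact hd3.congr_deriv (by
        rw [mul_neg, neg_mul_neg, mul_comm (Real.exp (-b * t)) b, ← mul_assoc, div_mul_cancel₀ _ hb.ne'])
    have hInt : IntervalIntegrable (fun t => Real.sqrt n * Real.exp (-b * t)) volume 0 1 :=
      (continuous_const.mul
        (Real.continuous_exp.comp (continuous_const.mul continuous_id))).intervalIntegrable _ _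
    rw [intervalIntegral.integral_eq_sub_of_hasDerivAt hderiv hInt]
    simp
    ring
  rw [h4]
  have h5 : Real.sqrt n / b - Real.sqrt n / b * Real.exp (-b) ≤ Real.sqrt n / b := by
    have e1 : 0 < Real.exp (-b) := Real.exp_pos _
    have e2 : 0 ≤ Real.sqrt (n:ℝ) / b := by positivity
    nlinarith
  calc (ENNReal.ofReal (Real.sqrt n / b - Real.sqrt n / b * Real.exp (-b))) ^ (1/(2:ℝ))
      ≤ (ENNReal.ofReal (Real.sqrt n / b)) ^ (1/(2:ℝ)) := by
        exact ENNReal.rpow_le_rpow (ENNReal.ofReal_le_ofReal h5) (by norm_num)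
    _ = ENNReal.ofReal (Real.sqrt (Real.sqrt n / (2 * n))) := by
        rw [ENNReal.ofReal_rpow_of_nonneg (by positivity) (by norm_num),
          ← Real.sqrt_eq_rpow, hbdef]

lemma stmt5_bound_tendsto :
    Tendsto (fun n : ℕ => ENNReal.ofReal (Real.sqrt (Real.sqrt n / (2 * n)))) atTop (nhds 0) := by
  have hr : Tendsto (fun n : ℕ => Real.sqrt (Real.sqrt n / (2 * n))) atTop (nhds 0) := by
    apply tendsto_of_tendsto_of_tendsto_of_le_of_le' tendsto_const_nhds
      ((tendsto_rpow_neg_atTop (by norm_num : (0:ℝ) < 1/4)).comp tendsto_natCast_atTop_atTop)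
    · exact Eventually.of_forall (fun n => Real.sqrt_nonneg _)
    · filter_upwards [eventually_ge_atTop 1] with n hn
      have h0 : (1:ℝ) ≤ (n:ℝ) := by exact_mod_cast hn
      have hs : 1 ≤ Real.sqrt (n:ℝ) := Real.one_le_sqrt.mpr h0
      have hs0 : 0 < Real.sqrt (n:ℝ) := by linarith
      have hnn : Real.sqrt (n:ℝ) * Real.sqrt (n:ℝ) = (n:ℝ) := Real.mul_self_sqrt (by positivity)
      have h1 : Real.sqrt (n:ℝ) / (2 * (n:ℝ)) ≤ (n:ℝ) ^ (-(1/2) : ℝ) := by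
        have hrp : ((n:ℝ)) ^ (-(1/2) : ℝ) = 1 / Real.sqrt (n:ℝ) := by
          rw [Real.rpow_neg (by positivity), ← Real.sqrt_eq_rpow, one_div]
        rw [hrp, div_le_div_iff₀ (by positivity) hs0]
        nlinarith
      have h2 : Real.sqrt (Real.sqrt n / (2 * n)) ≤ Real.sqrt ((n:ℝ) ^ (-(1/2) : ℝ)) :=
        Real.sqrt_le_sqrt h1
      have h3 : Real.sqrt ((n:ℝ) ^ (-(1/2) : ℝ)) = (n:ℝ) ^ (-(1/4) : ℝ) := by
        rw [Real.sqrt_eq_rpow, ← Real.rpow_mul (by positivity)]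
        norm_num
      exact h2.trans_eq h3
  have := ENNReal.tendsto_ofReal hr
  rwa [ENNReal.ofReal_zero] at this

end Stmt5Aux

/-- (a) If `xₙ → x` in `H` then the orbits `e^{·A}xₙ` converge to `e^{·A}x`
in `L²(0,T;H)`; (b) but the converse fails: there is a Hilbert space, a C₀-semigroup and a
sequence of initial data whose orbits tend to `0` in `L²(0,T;H)` while the data do not tend
to `0` in `H`. -/
theorem stmt5 :
    -- (a)
    (∀ (H : Type) [NormedAddCommGroup H] [InnerProductSpace ℝ H] [CompleteSpace H]
      (S : ℝ → H →L[ℝ] H),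
      S 0 = 1 →
      (∀ s t : ℝ, 0 ≤ s → 0 ≤ t → S (s + t) = (S s).comp (S t)) →
      (∀ v : H, ContinuousOn (fun t => S t v) (Set.Ici (0 : ℝ))) →
      ∀ (T : ℝ), 0 < T →
      ∀ (x : ℕ → H) (xlim : H), Tendsto x atTop (nhds xlim) →
        Tendsto
          (fun n => MeasureTheory.eLpNorm (fun t => S t (x n) - S t xlim) 2
            ((volume : Measure ℝ).restrict (Set.Ioc 0 T)))
          atTop (nhds 0)) ∧
    -- (b)
    (∃ (H : Type) (_ : NormedAddCommGroup H) (_ : InnerProductSpace ℝ H)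
      (_ : CompleteSpace H) (S : ℝ → H →L[ℝ] H) (T : ℝ) (x : ℕ → H),
      0 < T ∧
      S 0 = 1 ∧
      (∀ s t : ℝ, 0 ≤ s → 0 ≤ t → S (s + t) = (S s).comp (S t)) ∧
      (∀ v : H, ContinuousOn (fun t => S t v) (Set.Ici (0 : ℝ))) ∧
      Tendsto
        (fun n => MeasureTheory.eLpNorm (fun t => S t (x n)) 2
          ((volume : Measure ℝ).restrict (Set.Ioc 0 T)))
        atTop (nhds 0) ∧
      ¬ Tendsto x atTop (nhds 0)) := by
  constructor
  · -- part (a)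
    intro H _ _ _ S hS0 hSadd hScont T hT x xlim hx
    obtain ⟨C, hC⟩ := banach_steinhaus (g := fun t : Set.Icc (0:ℝ) T => S t) (fun v => by
      obtain ⟨C, hC⟩ := (isCompact_Icc (a := (0:ℝ)) (b := T)).exists_bound_of_continuousOn
        ((hScont v).mono Set.Icc_subset_Ici_self)
      exact ⟨C, fun t => hC t t.2⟩)
    have key : ∀ n, eLpNorm (fun t => S t (x n) - S t xlim) 2
        ((volume : Measure ℝ).restrict (Set.Ioc 0 T)) ≤
        (ENNReal.ofReal T) ^ ((2:ℝ≥0∞).toReal)⁻¹ * ENNReal.ofReal (C * ‖x n - xlim‖) := by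
      intro n
      have hbd : ∀ᵐ t ∂((volume : Measure ℝ).restrict (Set.Ioc 0 T)),
          ‖S t (x n) - S t xlim‖ ≤ C * ‖x n - xlim‖ := by
        rw [ae_restrict_iff' measurableSet_Ioc]
        filter_upwards with t ht
        have h1 : S t (x n) - S t xlim = S t (x n - xlim) := (map_sub (S t) _ _).symm
        rw [h1]
        calc ‖S t (x n - xlim)‖ ≤ ‖S t‖ * ‖x n - xlim‖ := (S t).le_opNorm _
          _ ≤ C * ‖x n - xlim‖ :=
            mul_le_mul_of_nonneg_right (hC ⟨t, ht.1.le, ht.2⟩) (norm_nonneg _)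
      have := eLpNorm_le_of_ae_bound (p := 2) hbd
      rwa [Measure.restrict_apply_univ, Real.volume_Ioc, sub_zero] at this
    have upper : Tendsto (fun n => (ENNReal.ofReal T) ^ ((2:ℝ≥0∞).toReal)⁻¹
        * ENNReal.ofReal (C * ‖x n - xlim‖)) atTop (nhds 0) := by
      have h1 : Tendsto (fun n => ‖x n - xlim‖) atTop (nhds 0) :=
        tendsto_iff_norm_sub_tendsto_zero.mp hx
      have h2 : Tendsto (fun n => C * ‖x n - xlim‖) atTop (nhds 0) := by
        simpa using h1.const_mul C
      have h3 := ENNReal.tendsto_ofReal h2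
      rw [ENNReal.ofReal_zero] at h3
      have hKne : (ENNReal.ofReal T) ^ ((2:ℝ≥0∞).toReal)⁻¹ ≠ ⊤ :=
        ENNReal.rpow_ne_top_of_nonneg (by norm_num) ENNReal.ofReal_ne_top
      have h4 := ENNReal.Tendsto.const_mul h3 (Or.inr hKne)
      simpa using h4
    exact tendsto_of_tendsto_of_tendsto_of_le_of_le tendsto_const_nhds upper
      (fun n => zero_le) key
  · -- part (b)
    refine ⟨lp (fun _ : ℕ => ℝ) 2, inferInstance, inferInstance, inferInstance,
      stmt5S, 1, stmt5x, one_pos, stmt5S_zero, fun s t hs ht => stmt5S_add hs ht,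
      fun v => (stmt5S_cont v).continuousOn, ?_, ?_⟩
    · -- orbits tend to zero
      have key : ∀ᶠ n in atTop, eLpNorm (fun t => stmt5S t (stmt5x n)) 2
          ((volume : Measure ℝ).restrict (Set.Ioc 0 1))
          ≤ ENNReal.ofReal (Real.sqrt (Real.sqrt n / (2 * n))) := by
        filter_upwards [eventually_ge_atTop 1] with n hn
        have h1 : eLpNorm (fun t => stmt5S t (stmt5x n)) 2
            ((volume : Measure ℝ).restrict (Set.Ioc 0 1))
            = eLpNorm (fun t => stmt5m t n * stmt5c n) 2
              ((volume : Measure ℝ).restrict (Set.Ioc 0 1)) := by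
          apply eLpNorm_congr_norm_ae
          filter_upwards with t
          rw [stmt5_orbit_norm, Real.norm_eq_abs,
            abs_of_nonneg (mul_nonneg (stmt5m_pos t n).le (stmt5c_nonneg n))]
        rw [h1]
        exact stmt5_scalar_bound hn
      exact tendsto_of_tendsto_of_tendsto_of_le_of_le' tendsto_const_nhds
        stmt5_bound_tendsto (Eventually.of_forall fun n => zero_le) key
    · -- the data do not tend to zero
      intro hcon
      have hn := hcon.norm
      rw [norm_zero] at hn
      have h1 : ∀ᶠ n in atTop, ‖stmt5x n‖ < 1 := hn.eventually (gt_mem_nhds one_pos)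
      obtain ⟨n, hn1, hn2⟩ := (h1.and (eventually_ge_atTop 1)).exists
      have h2 : ‖stmt5x n‖ = stmt5c n := by
        rw [stmt5x, stmt5_norm_single, Real.norm_eq_abs, abs_of_nonneg (stmt5c_nonneg n)]
      have h3 : (1:ℝ) ≤ stmt5c n := by
        rw [stmt5c]
        rw [Real.one_le_sqrt, Real.one_le_sqrt]
        exact_mod_cast hn2
      rw [h2] at hn1
      exact absurd hn1 (not_lt.mpr h3)
end

section
/- With the delay-type semigroup e^{tA*} on H = ℝⁿ × L²([−d,0];ℝⁿ) given by e^{tA*}(z₀,z₁) = (e^{t a₀*} z₀, e^{(ξ+t)a₀*} z₀ 1_{[−t,0]}(ξ) + z₁(ξ+t) 1_{[−d,−t)}(ξ)), for xₙ = (0, aₙ) with aₙ(ξ) = n^α 1_{[−d,−d+1/n]}(ξ) and T ≥ d, one has ∫₀^T |e^{tA*} xₙ|²_H dt = (1/2) n^{2α−2}. -/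
open MeasureTheory Set

/-- For the delay-type adjoint semigroup on `ℝⁿ × L²([−d,0];ℝⁿ)` (here in
its explicit form, with first component `0` since `x₀ = 0`; taking `a₀ = 0` as the context
allows), with `xₙ = (0, aₙ)`, `aₙ = n^α 1_{[−d,−d+1/n]}`, and `T ≥ d`, the squared `L²(0,T;H)`
norm of the orbit is
`∫₀^T |e^{tA*}xₙ|²_H dt = ∫₀^T ∫_{−d}^0 (1_{[−d,−t)}(ξ) aₙ(ξ+t))² dξ dt = (1/2) n^{2α−2}`. -/
theorem stmt6 (d T α : ℝ) (n : ℕ) (hd : 0 < d) (hT : d ≤ T) (hn : 1 ≤ n)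
    (hnd : 1 / (n : ℝ) ≤ d) :
    (∫ t in Set.Ioc (0 : ℝ) T,
      ∫ ξ in Set.Ioc (-d) (0 : ℝ),
        (Set.indicator (Set.Ico (-d) (-t))
          (fun ξ => Set.indicator (Set.Icc (-d) (-d + 1 / (n : ℝ)))
            (fun _ => (n : ℝ) ^ α) (ξ + t)) ξ) ^ 2)
      = (1 / 2) * (n : ℝ) ^ (2 * α - 2) := by
  have hn0 : (0:ℝ) < n := by exact_mod_cast Nat.lt_of_lt_of_le Nat.zero_lt_one hn
  have hinv0 : (0:ℝ) < 1 / n := by positivity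
  set c : ℝ := (n:ℝ) ^ α with hc
  have hcsq : c ^ 2 = (n:ℝ) ^ (2*α) := by
    rw [hc, ← Real.rpow_natCast ((n:ℝ)^α) 2, ← Real.rpow_mul hn0.le]
    norm_num [mul_comm]
  have hinner : ∀ t ∈ Set.Ioc (0:ℝ) T,
      (∫ ξ in Set.Ioc (-d) (0:ℝ),
        (Set.indicator (Set.Ico (-d) (-t))
          (fun ξ => Set.indicator (Set.Icc (-d) (-d + 1 / (n : ℝ)))
            (fun _ => (n : ℝ) ^ α) (ξ + t)) ξ) ^ 2)
      = c^2 * max (1/(n:ℝ) - t) 0 := by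
    intro t ht
    obtain ⟨ht0, htT⟩ := ht
    set S : Set ℝ := Set.Ico (-d) (-t) ∩ {ξ : ℝ | ξ + t ∈ Set.Icc (-d) (-d + 1/(n:ℝ))}
      with hS
    have hSm : MeasurableSet S := measurableSet_Ico.inter
      (measurableSet_Icc.preimage (measurable_id.add_const t))
    have h1 : ∀ ξ : ℝ, (Set.indicator (Set.Ico (-d) (-t))
        (fun ξ => Set.indicator (Set.Icc (-d) (-d + 1/(n:ℝ))) (fun _ => (n:ℝ)^α) (ξ+t)) ξ)^2
        = S.indicator (fun _ => c^2) ξ := by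
      intro ξ
      by_cases h₁ : ξ ∈ Set.Ico (-d) (-t) <;>
        by_cases h₂ : ξ + t ∈ Set.Icc (-d) (-d + 1/(n:ℝ)) <;>
        simp [hS, Set.indicator, h₁, h₂, hc]
    simp only [h1]
    rw [MeasureTheory.setIntegral_indicator hSm, MeasureTheory.setIntegral_const]
    have hvol : volume (S ∩ Set.Ioc (-d) (0:ℝ)) = ENNReal.ofReal (1/(n:ℝ) - t) := by
      have hu : (-d + 1/(n:ℝ) - t) - (-d) = 1/(n:ℝ) - t := by ring
      apply le_antisymm
      · calc volume (S ∩ Set.Ioc (-d) (0:ℝ))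
            ≤ volume (Set.Ioc (-d) (-d + 1/(n:ℝ) - t)) := by
              apply measure_mono
              rintro ξ ⟨⟨_, hmem⟩, hio⟩
              exact ⟨hio.1, by linarith [hmem.2]⟩
          _ = ENNReal.ofReal (1/(n:ℝ) - t) := by rw [Real.volume_Ioc, hu]
      · calc ENNReal.ofReal (1/(n:ℝ) - t)
            = volume (Set.Ioo (-d) (-d + 1/(n:ℝ) - t)) := by rw [Real.volume_Ioo, hu]
          _ ≤ volume (S ∩ Set.Ioc (-d) (0:ℝ)) := by
              apply measure_mono
              rintro ξ ⟨hl, hr⟩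
              refine ⟨⟨⟨hl.le, by linarith⟩, ⟨by linarith, by linarith⟩⟩, hl, by linarith⟩
    rw [Set.inter_comm, MeasureTheory.measureReal_def, hvol, smul_eq_mul, ENNReal.toReal_ofReal', mul_comm]
  rw [MeasureTheory.setIntegral_congr_fun measurableSet_Ioc hinner]
  have hnT : 1/(n:ℝ) ≤ T := hnd.trans hT
  have hcont : Continuous fun t : ℝ => c^2 * max (1/(n:ℝ) - t) 0 :=
    continuous_const.mul ((continuous_const.sub continuous_id).max continuous_const)
  rw [← Set.Ioc_union_Ioc_eq_Ioc hinv0.le hnT,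
    MeasureTheory.setIntegral_union (Set.Ioc_disjoint_Ioc_of_le le_rfl) measurableSet_Ioc
      (hcont.integrableOn_Ioc) (hcont.integrableOn_Ioc)]
  have h2 : (∫ t in Set.Ioc (1/(n:ℝ)) T, c^2 * max (1/(n:ℝ) - t) 0) = 0 := by
    rw [MeasureTheory.setIntegral_congr_fun measurableSet_Ioc
      (g := fun _ => (0:ℝ)) (fun t ht => by
        simp only
        rw [max_eq_right (by linarith [ht.1])]
        ring)]
    simp
  have h3 : (∫ t in Set.Ioc (0:ℝ) (1/(n:ℝ)), c^2 * max (1/(n:ℝ) - t) 0)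
      = c^2 * (1/(2*(n:ℝ)^2)) := by
    rw [MeasureTheory.setIntegral_congr_fun measurableSet_Ioc
      (g := fun t => c^2 * (1/(n:ℝ) - t)) (fun t ht => by
        simp only
        rw [max_eq_left (by linarith [ht.2])])]
    rw [← intervalIntegral.integral_of_le hinv0.le,
      intervalIntegral.integral_const_mul,
      intervalIntegral.integral_sub intervalIntegrable_const intervalIntegral.intervalIntegrable_id,
      intervalIntegral.integral_const]
    have hid : (∫ x in (0:ℝ)..(1/(n:ℝ)), x) = (1/(n:ℝ))^2/2 := by norm_num
    rw [hid]
    have : ((n:ℝ))^2 ≠ 0 := by positivity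
    field_simp
    have hnn : (n:ℝ)^2 * (n:ℝ)⁻¹^2 = 1 := by rw [← mul_pow, mul_inv_cancel₀ hn0.ne', one_pow]
    linear_combination (2 * c^2) * hnn
  rw [h2, h3, add_zero, hcsq]
  have h4 : (n:ℝ) ^ (2*α - 2) = (n:ℝ)^(2*α) / (n:ℝ)^2 := by
    rw [Real.rpow_sub hn0]
    norm_num [Real.rpow_natCast (n:ℝ) 2]
  rw [h4]
  have : ((n:ℝ))^2 ≠ 0 := by positivity
  field_simp
end

section
/- For the delay semigroup on H = ℝⁿ × L²([−d,0];ℝⁿ) generated by A₁ with A₁(x₀,x₁) = (a₀x₀ + x₁(0), −x₁′) on D(A₁) = {x ∈ H : x₁ ∈ W^{1,2}, x₁(−d) = 0}, the semigroup is given explicitly by e^{tA₁}(x₀,x₁) = (e^{ta₀}x₀ + ∫_{−d}^0 1_{[−t,0]}(s) e^{(t+s)a₀} x₁(s) ds, x₁(·−t) 1_{[−d+t,0]}(·)), and the adjoint semigroup by e^{tA₁*}(z₀,z₁) = (e^{ta₀*} z₀, e^{(·+t)a₀*} z₀ 1_{[−t,0]}(·) + z₁(·+t) 1_{[−d,−t)}(·)).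 In particular, these two families of operators are adjoint to each other: ⟨e^{tA₁}x, z⟩_H = ⟨x, e^{tA₁*}z⟩_H for all x, z ∈ H and t ∈ [0,d]. -/
open MeasureTheory Set NormedSpace
open scoped RealInnerProductSpace

section Aux

variable {F : Type*} [NormedAddCommGroup F] [InnerProductSpace ℝ F] [CompleteSpace F]

lemma aux_exp_adjoint (a : F →L[ℝ] F) (r : ℝ) :
    NormedSpace.exp (r • ContinuousLinearMap.adjoint a)
      = ContinuousLinearMap.adjoint (NormedSpace.exp (r • a)) := by
  rw [← ContinuousLinearMap.star_eq_adjoint, ← ContinuousLinearMap.star_eq_adjoint, star_exp,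
    star_smul, star_trivial r]

lemma aux_exp_inner (a : F →L[ℝ] F) (r : ℝ) (x z : F) :
    ⟪(NormedSpace.exp (r • a)) x, z⟫
      = ⟪x, (NormedSpace.exp (r • ContinuousLinearMap.adjoint a)) z⟫ := by
  rw [aux_exp_adjoint, ContinuousLinearMap.adjoint_inner_right]

lemma aux_integrable_inner {α : Type*} {m : MeasurableSpace α} {μ : Measure α}
    {f g : α → F} (hf : MemLp f 2 μ) (hg : MemLp g 2 μ) :
    Integrable (fun x => ⟪f x, g x⟫) μ := by
  have h := L2.integrable_inner (𝕜 := ℝ) (hf.toLp f) (hg.toLp g)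
  refine h.congr ?_
  filter_upwards [hf.coeFn_toLp, hg.coeFn_toLp] with x h1 h2
  rw [h1, h2]

lemma aux_exp_continuous (n : ℕ) :
    Continuous (NormedSpace.exp :
      (EuclideanSpace ℝ (Fin n) →L[ℝ] EuclideanSpace ℝ (Fin n)) → _) := by
  rw [← continuousOn_univ,
    ← Metric.eball_top_eq_univ (0 : EuclideanSpace ℝ (Fin n) →L[ℝ] EuclideanSpace ℝ (Fin n)),
    ← expSeries_radius_eq_top ℝ (EuclideanSpace ℝ (Fin n) →L[ℝ] EuclideanSpace ℝ (Fin n))]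
  exact continuousOn_exp

lemma aux_aesm (n : ℕ) (t : ℝ) (a₀ : EuclideanSpace ℝ (Fin n) →L[ℝ] EuclideanSpace ℝ (Fin n))
    (x₁ : ℝ → EuclideanSpace ℝ (Fin n)) (μ : Measure ℝ)
    (hx₁ : AEStronglyMeasurable x₁ μ) :
    AEStronglyMeasurable (fun s => (NormedSpace.exp ((t + s) • a₀)) (x₁ s)) μ :=
  (ContinuousLinearMap.apply ℝ (EuclideanSpace ℝ (Fin n))).aestronglyMeasurable_comp₂
    hx₁ (((aux_exp_continuous n).comp
      ((continuous_const.add continuous_id).smul continuous_const)).aestronglyMeasurable)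

end Aux

set_option maxHeartbeats 1000000 in
/-- For the delay semigroup on `H = ℝⁿ × L²([−d,0];ℝⁿ)` with the explicit
formulas
`e^{tA₁}(x₀,x₁) = (e^{ta₀}x₀ + ∫_{−d}^0 1_{[−t,0]}(s) e^{(t+s)a₀} x₁(s) ds, x₁(·−t)1_{[−d+t,0]})`
and
`e^{tA₁*}(z₀,z₁) = (e^{ta₀*}z₀, e^{(·+t)a₀*}z₀ 1_{[−t,0]} + z₁(·+t)1_{[−d,−t)})`,
these families are adjoint to each other:
`⟨e^{tA₁}x, z⟩_H = ⟨x, e^{tA₁*}z⟩_H` for all `x, z ∈ H` and `t ∈ [0,d]`. -/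
theorem stmt15 (n : ℕ) (d t : ℝ) (hd : 0 < d) (ht0 : 0 ≤ t) (htd : t ≤ d)
    (a₀ : EuclideanSpace ℝ (Fin n) →L[ℝ] EuclideanSpace ℝ (Fin n))
    (x₀ z₀ : EuclideanSpace ℝ (Fin n))
    (x₁ z₁ : ℝ → EuclideanSpace ℝ (Fin n))
    (hx₁ : MeasureTheory.MemLp x₁ 2 ((volume : Measure ℝ).restrict (Set.Ioc (-d) 0)))
    (hz₁ : MeasureTheory.MemLp z₁ 2 ((volume : Measure ℝ).restrict (Set.Ioc (-d) 0))) :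
    ⟪(NormedSpace.exp (t • a₀)) x₀ +
        ∫ s in Set.Ioc (-d) (0 : ℝ),
          Set.indicator (Set.Icc (-t) 0)
            (fun s => (NormedSpace.exp ((t + s) • a₀)) (x₁ s)) s, z₀⟫ +
      (∫ ξ in Set.Ioc (-d) (0 : ℝ),
        ⟪Set.indicator (Set.Icc (-d + t) 0) (fun ξ => x₁ (ξ - t)) ξ, z₁ ξ⟫)
    =
    ⟪x₀, (NormedSpace.exp (t • ContinuousLinearMap.adjoint a₀)) z₀⟫ +
      ∫ ξ in Set.Ioc (-d) (0 : ℝ),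
        ⟪x₁ ξ,
          Set.indicator (Set.Icc (-t) 0)
            (fun ξ => (NormedSpace.exp ((ξ + t) • ContinuousLinearMap.adjoint a₀)) z₀) ξ +
          Set.indicator (Set.Ico (-d) (-t)) (fun ξ => z₁ (ξ + t)) ξ⟫ := by
  haveI : IsFiniteMeasure ((volume : Measure ℝ).restrict (Set.Ioc (-d) 0)) :=
    ⟨by rw [Measure.restrict_apply_univ]; exact measure_Ioc_lt_top⟩
  have hx₁i : Integrable x₁ ((volume : Measure ℝ).restrict (Set.Ioc (-d) 0)) :=
    hx₁.integrable one_le_two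
  -- continuity of the operator family
  have hEcont : Continuous (fun s : ℝ => NormedSpace.exp ((t + s) • a₀)) :=
    (aux_exp_continuous n).comp ((continuous_const.add continuous_id).smul continuous_const)
  obtain ⟨C, hC⟩ := isCompact_Icc.exists_bound_of_continuousOn
    (s := Set.Icc (-d) (0 : ℝ)) hEcont.continuousOn
  -- integrability of the convolution-type integrand
  have hF : Integrable (fun s => (NormedSpace.exp ((t + s) • a₀)) (x₁ s))
      ((volume : Measure ℝ).restrict (Set.Ioc (-d) 0)) := by
    have hmeas : AEStronglyMeasurable (fun s => (NormedSpace.exp ((t + s) • a₀)) (x₁ s))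
        ((volume : Measure ℝ).restrict (Set.Ioc (-d) 0)) :=
      aux_aesm n t a₀ x₁ _ hx₁.1
    have hbd : Integrable (fun s => C * ‖x₁ s‖)
        ((volume : Measure ℝ).restrict (Set.Ioc (-d) 0)) := hx₁i.norm.const_mul C
    refine Integrable.mono' hbd hmeas ?_
    · filter_upwards [ae_restrict_mem measurableSet_Ioc] with s hs
      calc ‖(NormedSpace.exp ((t + s) • a₀)) (x₁ s)‖
          ≤ ‖NormedSpace.exp ((t + s) • a₀)‖ * ‖x₁ s‖ :=
            ContinuousLinearMap.le_opNorm _ _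
        _ ≤ C * ‖x₁ s‖ :=
            mul_le_mul_of_nonneg_right (hC s ⟨hs.1.le, hs.2⟩) (norm_nonneg _)
  have h1 : Integrable
      ((Set.Icc (-t) (0:ℝ)).indicator (fun s => (NormedSpace.exp ((t + s) • a₀)) (x₁ s)))
      ((volume : Measure ℝ).restrict (Set.Ioc (-d) 0)) :=
    hF.indicator measurableSet_Icc
  -- the pointwise adjoint identity for the indicator terms
  have hpt : ∀ ξ : ℝ,
      ⟪(Set.Icc (-t) (0:ℝ)).indicator (fun s => (NormedSpace.exp ((t + s) • a₀)) (x₁ s)) ξ, z₀⟫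
        = ⟪x₁ ξ, (Set.Icc (-t) (0:ℝ)).indicator
            (fun ξ => (NormedSpace.exp ((ξ + t) • ContinuousLinearMap.adjoint a₀)) z₀) ξ⟫ := by
    intro ξ
    by_cases h : ξ ∈ Set.Icc (-t) (0:ℝ)
    · rw [Set.indicator_of_mem h, Set.indicator_of_mem h, aux_exp_inner a₀ (t + ξ), add_comm t ξ]
    · rw [Set.indicator_of_notMem h, Set.indicator_of_notMem h, inner_zero_left,
        inner_zero_right]
  have h2 : Integrable (fun ξ => ⟪x₁ ξ, (Set.Icc (-t) (0:ℝ)).indicator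
        (fun ξ => (NormedSpace.exp ((ξ + t) • ContinuousLinearMap.adjoint a₀)) z₀) ξ⟫)
      ((volume : Measure ℝ).restrict (Set.Ioc (-d) 0)) :=
    (h1.inner_const z₀).congr (Filter.Eventually.of_forall hpt)
  -- integrability of the delay term
  have hIoo : Set.Ico (-d) (-t) ∩ Set.Ioc (-d) (0:ℝ) = Set.Ioo (-d) (-t) := by
    ext ξ
    simp only [Set.mem_inter_iff, Set.mem_Ico, Set.mem_Ioc, Set.mem_Ioo]
    constructor
    · rintro ⟨⟨_, h2⟩, ⟨h3, _⟩⟩; exact ⟨h3, h2⟩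
    · rintro ⟨h1', h2'⟩; exact ⟨⟨by linarith, h2'⟩, ⟨h1', by linarith⟩⟩
  have hzshift : MemLp (fun ξ : ℝ => z₁ (ξ + t)) 2
      ((volume : Measure ℝ).restrict (Set.Ioo (-d) (-t))) := by
    have hpre : (fun x : ℝ => x + t) ⁻¹' Set.Ioc (-d) 0 = Set.Ioc (-d - t) (-t) := by
      ext x
      simp only [Set.mem_preimage, Set.mem_Ioc]
      constructor
      · rintro ⟨h1', h2'⟩; exact ⟨by linarith, by linarith⟩
      · rintro ⟨h1', h2'⟩; exact ⟨by linarith, by linarith⟩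
    have mp : MeasurePreserving (fun x : ℝ => x + t)
        ((volume : Measure ℝ).restrict (Set.Ioc (-d - t) (-t)))
        ((volume : Measure ℝ).restrict (Set.Ioc (-d) 0)) := by
      have h := (measurePreserving_add_right (volume : Measure ℝ) t).restrict_preimage
        (measurableSet_Ioc (a := -d) (b := (0:ℝ)))
      rwa [hpre] at h
    have hcomp := hz₁.comp_measurePreserving mp
    have hsub : Set.Ioo (-d) (-t) ⊆ Set.Ioc (-d - t) (-t) := by
      rintro x ⟨h1', h2'⟩; exact ⟨by linarith, h2'.le⟩
    exact (hcomp.mono_measure (Measure.restrict_mono hsub le_rfl))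
  have hinner3 : ∀ ξ : ℝ,
      ⟪x₁ ξ, (Set.Ico (-d) (-t)).indicator (fun ξ => z₁ (ξ + t)) ξ⟫
        = (Set.Ico (-d) (-t)).indicator (fun ξ => ⟪x₁ ξ, z₁ (ξ + t)⟫) ξ := by
    intro ξ
    by_cases h : ξ ∈ Set.Ico (-d) (-t)
    · rw [Set.indicator_of_mem h, Set.indicator_of_mem h]
    · rw [Set.indicator_of_notMem h, Set.indicator_of_notMem h, inner_zero_right]
  have h3 : Integrable (fun ξ => ⟪x₁ ξ, (Set.Ico (-d) (-t)).indicator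
        (fun ξ => z₁ (ξ + t)) ξ⟫) ((volume : Measure ℝ).restrict (Set.Ioc (-d) 0)) := by
    have heq : (fun ξ => ⟪x₁ ξ, (Set.Ico (-d) (-t)).indicator (fun ξ => z₁ (ξ + t)) ξ⟫)
        = (Set.Ico (-d) (-t)).indicator (fun ξ => ⟪x₁ ξ, z₁ (ξ + t)⟫) := funext hinner3
    rw [heq, integrable_indicator_iff measurableSet_Ico, IntegrableOn,
      Measure.restrict_restrict measurableSet_Ico, hIoo]
    have hsub' : Set.Ioo (-d) (-t) ⊆ Set.Ioc (-d) (0:ℝ) :=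
      Set.Ioo_subset_Ioc_self.trans (Set.Ioc_subset_Ioc_right (by linarith))
    exact aux_integrable_inner
      (hx₁.mono_measure (Measure.restrict_mono hsub' le_rfl)) hzshift
  -- step C : moving the inner product inside the integral
  have hIz : ⟪(∫ s in Set.Ioc (-d) (0:ℝ),
        (Set.Icc (-t) (0:ℝ)).indicator (fun s => (NormedSpace.exp ((t + s) • a₀)) (x₁ s)) s),
        z₀⟫
      = ∫ ξ in Set.Ioc (-d) (0:ℝ), ⟪x₁ ξ, (Set.Icc (-t) (0:ℝ)).indicator
          (fun ξ => (NormedSpace.exp ((ξ + t) • ContinuousLinearMap.adjoint a₀)) z₀) ξ⟫ := by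
    rw [real_inner_comm, ← integral_inner h1]
    refine integral_congr_ae (Filter.Eventually.of_forall fun ξ => ?_)
    exact (real_inner_comm _ _).trans (hpt ξ)
  -- step E3 : change of variables in the delay term
  have hE3 : (∫ ξ in Set.Ioc (-d) (0:ℝ),
        ⟪(Set.Icc (-d + t) (0:ℝ)).indicator (fun ξ => x₁ (ξ - t)) ξ, z₁ ξ⟫)
      = ∫ ξ in Set.Ioc (-d) (0:ℝ),
        ⟪x₁ ξ, (Set.Ico (-d) (-t)).indicator (fun ξ => z₁ (ξ + t)) ξ⟫ := by
    have e1 : ∀ ξ : ℝ,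
        ⟪(Set.Icc (-d + t) (0:ℝ)).indicator (fun ξ => x₁ (ξ - t)) ξ, z₁ ξ⟫
          = (Set.Icc (-d + t) (0:ℝ)).indicator (fun ξ => ⟪x₁ (ξ - t), z₁ ξ⟫) ξ := by
      intro ξ
      by_cases h : ξ ∈ Set.Icc (-d + t) (0:ℝ)
      · rw [Set.indicator_of_mem h, Set.indicator_of_mem h]
      · rw [Set.indicator_of_notMem h, Set.indicator_of_notMem h, inner_zero_left]
    simp_rw [e1, hinner3]
    rw [← integral_indicator measurableSet_Ioc, ← integral_indicator measurableSet_Ioc,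
      Set.indicator_indicator, Set.indicator_indicator]
    rw [← integral_add_right_eq_self
      ((Set.Ioc (-d) (0:ℝ) ∩ Set.Icc (-d + t) (0:ℝ)).indicator
        (fun ξ => ⟪x₁ (ξ - t), z₁ ξ⟫)) t]
    have hae : ∀ᵐ ξ ∂(volume : Measure ℝ), ξ ≠ -d ∧ ξ ≠ -t := by
      have hsub2 : {ξ : ℝ | ¬(ξ ≠ -d ∧ ξ ≠ -t)} ⊆ ({-d, -t} : Set ℝ) := by
        intro ξ hξ
        simp only [Set.mem_setOf_eq, ne_eq, not_and_or, not_not] at hξ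
        simpa using hξ
      exact ae_iff.mpr (measure_mono_null hsub2
        (Set.Finite.measure_zero (Set.toFinite _) _))
    refine integral_congr_ae ?_
    filter_upwards [hae] with ξ hξ
    by_cases h : ξ ∈ Set.Ioc (-d) (0:ℝ) ∩ Set.Ico (-d) (-t)
    · have h' : ξ + t ∈ Set.Ioc (-d) (0:ℝ) ∩ Set.Icc (-d + t) (0:ℝ) := by
        obtain ⟨⟨ha, hb⟩, ⟨hc, he⟩⟩ := h
        exact ⟨⟨by linarith, by linarith⟩, ⟨by linarith, by linarith⟩⟩
      rw [Set.indicator_of_mem h', Set.indicator_of_mem h]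
      simp only [add_sub_cancel_right]
    · have h' : ξ + t ∉ Set.Ioc (-d) (0:ℝ) ∩ Set.Icc (-d + t) (0:ℝ) := by
        intro hc
        apply h
        obtain ⟨⟨ha, hb⟩, ⟨hcc, he⟩⟩ := hc
        have h3' : -d ≤ ξ := by linarith
        have h4' : ξ ≤ -t := by linarith
        exact ⟨⟨lt_of_le_of_ne h3' (Ne.symm hξ.1), by linarith⟩,
          ⟨h3', lt_of_le_of_ne h4' hξ.2⟩⟩
      rw [Set.indicator_of_notMem h', Set.indicator_of_notMem h]
  -- assemble
  have hsplit : (∫ ξ in Set.Ioc (-d) (0:ℝ),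
        ⟪x₁ ξ, (Set.Icc (-t) (0:ℝ)).indicator
            (fun ξ => (NormedSpace.exp ((ξ + t) • ContinuousLinearMap.adjoint a₀)) z₀) ξ
          + (Set.Ico (-d) (-t)).indicator (fun ξ => z₁ (ξ + t)) ξ⟫)
      = (∫ ξ in Set.Ioc (-d) (0:ℝ), ⟪x₁ ξ, (Set.Icc (-t) (0:ℝ)).indicator
            (fun ξ => (NormedSpace.exp ((ξ + t) • ContinuousLinearMap.adjoint a₀)) z₀) ξ⟫)
        + ∫ ξ in Set.Ioc (-d) (0:ℝ),
            ⟪x₁ ξ, (Set.Ico (-d) (-t)).indicator (fun ξ => z₁ (ξ + t)) ξ⟫ := by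
    rw [← integral_add h2 h3]
    simp_rw [inner_add_right]
  rw [inner_add_left, aux_exp_inner a₀ t x₀ z₀, hIz, hE3, hsplit]
  ring
end

section
/- For the delay semigroup on H = ℝⁿ × L²([−d,0];ℝⁿ) with P(x₀,x₁) = (x₀,0), one has P e^{tA₁}(x₀,x₁) = (e^{ta₀}x₀ + ∫_{−d}^0 1_{[−t,0]}(s) e^{(t+s)a₀} x₁(s) ds, 0); moreover the family of semigroup operators in the given explicit form satisfies the semigroup property e^{(t+s)A₁} = e^{tA₁} e^{sA₁} for t, s ≥ 0 with t + s ≤ d. -/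
open MeasureTheory Set

section aux

variable {n : ℕ}

local notation "E" => EuclideanSpace ℝ (Fin n)

private lemma expB_add (a₀ : E →L[ℝ] E) (u v : ℝ) :
    NormedSpace.exp ((u + v) • a₀) = NormedSpace.exp (u • a₀) * NormedSpace.exp (v • a₀) := by
  have h : (u + v) • a₀ = u • a₀ + v • a₀ := add_smul u v a₀
  rw [h]
  letI : NormedAlgebra ℚ (E →L[ℝ] E) := .restrictScalars ℚ ℝ _
  refine NormedSpace.exp_add_of_commute ?_
  show (u • a₀) * (v • a₀) = (v • a₀) * (u • a₀)
  ext x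
  simp only [ContinuousLinearMap.mul_apply, ContinuousLinearMap.smul_apply, _root_.map_smul,
    smul_smul]
  rw [mul_comm]

private lemma key_int (d c : ℝ) (a₀ : E →L[ℝ] E) (g : ℝ → E)
    (hg : Integrable g (volume.restrict (Ioc (-d) 0))) :
    Integrable (fun r => NormedSpace.exp ((c + r) • a₀) (g r))
      (volume.restrict (Ioc (-d) 0)) := by
  letI : NormedAlgebra ℚ (E →L[ℝ] E) := .restrictScalars ℚ ℝ _
  have hBcont : Continuous (fun r : ℝ => NormedSpace.exp ((c + r) • a₀)) :=
    NormedSpace.exp_continuous.comp ((continuous_const.add continuous_id).smul continuous_const)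
  obtain ⟨M, hM⟩ := (isCompact_Icc (a := -d) (b := (0:ℝ))).exists_bound_of_continuousOn
    hBcont.continuousOn
  have hmeas : AEStronglyMeasurable (fun r => NormedSpace.exp ((c + r) • a₀) (g r))
      (volume.restrict (Ioc (-d) 0)) :=
    isBoundedBilinearMap_apply.continuous.comp_aestronglyMeasurable
      (hBcont.aestronglyMeasurable.prodMk hg.aestronglyMeasurable)
  refine Integrable.mono' (hg.norm.const_mul M) hmeas ?_
  filter_upwards [ae_restrict_mem measurableSet_Ioc] with r hr
  calc ‖NormedSpace.exp ((c + r) • a₀) (g r)‖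
      ≤ ‖NormedSpace.exp ((c + r) • a₀)‖ * ‖g r‖ := ContinuousLinearMap.le_opNorm _ _
    _ ≤ M * ‖g r‖ :=
        mul_le_mul_of_nonneg_right (hM r (Ioc_subset_Icc_self hr)) (norm_nonneg _)

private lemma clm_ind (L : E →L[ℝ] E) (S : Set ℝ) (f : ℝ → E) (r : ℝ) :
    L (S.indicator f r) = S.indicator (fun r => L (f r)) r := by
  by_cases h : r ∈ S <;> simp [h]

private lemma aeq (S : Set ℝ) (a b p : ℝ) (h1 : S \ Ioc a b ⊆ {p}) (h2 : Ioc a b \ S ⊆ {p}) :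
    S =ᵐ[(volume : Measure ℝ)] Ioc a b :=
  ae_eq_set.2 ⟨measure_mono_null h1 (measure_singleton p),
    measure_mono_null h2 (measure_singleton p)⟩

private lemma red (F : ℝ → E) (S : Set ℝ) (a b : ℝ)
    (h : S =ᵐ[(volume : Measure ℝ)] Ioc a b) :
    ∫ r, S.indicator F r = ∫ r, (Ioc a b).indicator F r :=
  integral_congr_ae (indicator_ae_eq_of_ae_eq_set h)


private lemma aeq2 (a b a' : ℝ) (h : a' ≤ a) :
    (Ioc a' b ∩ Icc a b : Set ℝ) =ᵐ[(volume : Measure ℝ)] Ioc a b := by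
  refine aeq _ _ _ a ?_ ?_
  · rintro r ⟨⟨hm1, hm2⟩, hm3⟩
    simp only [mem_Ioc, mem_Icc, mem_singleton_iff] at *
    push_neg at hm3
    rcases lt_or_ge a r with hlt | hle
    · exact absurd (hm3 hlt) (not_lt.2 hm2.2)
    · exact le_antisymm hle hm2.1
  · rintro r ⟨hm, hm2⟩
    simp only [mem_Ioc, mem_Icc, mem_inter_iff] at *
    exact absurd ⟨⟨lt_of_le_of_lt h hm.1, hm.2⟩, ⟨le_of_lt hm.1, hm.2⟩⟩ hm2

end aux


/-- The delay semigroup on `ℝⁿ × L²([−d,0];ℝⁿ)` in its explicit form: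
`e^{tA₁}(x₀,x₁) = (e^{ta₀}x₀ + ∫_{−d}^0 1_{[−t,0]}(s) e^{(t+s)a₀} x₁(s) ds,
x₁(·−t) 1_{[−d+t,0]}(·))`. -/
noncomputable def delaySG {n : ℕ} (d : ℝ)
    (a₀ : EuclideanSpace ℝ (Fin n) →L[ℝ] EuclideanSpace ℝ (Fin n)) (t : ℝ)
    (x : EuclideanSpace ℝ (Fin n) × (ℝ → EuclideanSpace ℝ (Fin n))) :
    EuclideanSpace ℝ (Fin n) × (ℝ → EuclideanSpace ℝ (Fin n)) :=
  ((NormedSpace.exp (t • a₀)) x.1 +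
      ∫ s in Set.Ioc (-d) (0 : ℝ),
        Set.indicator (Set.Icc (-t) 0)
          (fun s => (NormedSpace.exp ((t + s) • a₀)) (x.2 s)) s,
    fun ξ => Set.indicator (Set.Icc (-d + t) 0) (fun ξ => x.2 (ξ - t)) ξ)

/-- The projection `P(x₀,x₁) = (x₀,0)` on `ℝⁿ × L²([−d,0];ℝⁿ)`. -/
def delayP {n : ℕ}
    (x : EuclideanSpace ℝ (Fin n) × (ℝ → EuclideanSpace ℝ (Fin n))) :
    EuclideanSpace ℝ (Fin n) × (ℝ → EuclideanSpace ℝ (Fin n)) :=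
  (x.1, 0)

/-- `P e^{tA₁}(x₀,x₁) = (e^{ta₀}x₀ + ∫_{−d}^0 1_{[−t,0]}(s) e^{(t+s)a₀}x₁(s) ds, 0)`,
and the explicit family satisfies the semigroup property `e^{(t+s)A₁} = e^{tA₁} e^{sA₁}`
for `t, s ≥ 0` with `t + s ≤ d`. -/
theorem stmt16 (n : ℕ) (d : ℝ) (hd : 0 < d)
    (a₀ : EuclideanSpace ℝ (Fin n) →L[ℝ] EuclideanSpace ℝ (Fin n)) :
    (∀ t : ℝ, ∀ x : EuclideanSpace ℝ (Fin n) × (ℝ → EuclideanSpace ℝ (Fin n)),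
      delayP (delaySG d a₀ t x) =
        ((NormedSpace.exp (t • a₀)) x.1 +
          ∫ s in Set.Ioc (-d) (0 : ℝ),
            Set.indicator (Set.Icc (-t) 0)
              (fun s => (NormedSpace.exp ((t + s) • a₀)) (x.2 s)) s, 0)) ∧
    (∀ t s : ℝ, 0 ≤ t → 0 ≤ s → t + s ≤ d →
      ∀ x : EuclideanSpace ℝ (Fin n) × (ℝ → EuclideanSpace ℝ (Fin n)),
        MeasureTheory.Integrable x.2 ((volume : Measure ℝ).restrict (Set.Ioc (-d) 0)) →
        delaySG d a₀ (t + s) x = delaySG d a₀ t (delaySG d a₀ s x)) := by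
  constructor
  · intro t x; rfl
  · intro t s ht hs hts x hint
    simp only [delaySG]
    simp only [Prod.mk.injEq]
    constructor
    · -- first component
      set F : ℝ → EuclideanSpace ℝ (Fin n) :=
        fun r => NormedSpace.exp ((t + s + r) • a₀) (x.2 r) with hF_def
      have hF : Integrable F (volume.restrict (Ioc (-d) 0)) := key_int d (t + s) a₀ x.2 hint
      have e1 : (∫ r in Ioc (-d) 0, (Icc (-(t + s)) 0).indicator F r)
          = ∫ r, (Ioc (-(t + s)) 0).indicator F r := by
        rw [← integral_indicator measurableSet_Ioc]
        simp only [indicator_indicator]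
        exact red F _ _ _ (aeq2 _ _ _ (by linarith))
      have hIs : Integrable (fun r => (Icc (-s) 0).indicator
          (fun r => NormedSpace.exp ((s + r) • a₀) (x.2 r)) r)
          (volume.restrict (Ioc (-d) 0)) :=
        (key_int d s a₀ x.2 hint).indicator measurableSet_Icc
      have e2 : NormedSpace.exp (t • a₀) (NormedSpace.exp (s • a₀) x.1 +
            ∫ r in Ioc (-d) 0, (Icc (-s) 0).indicator
              (fun r => NormedSpace.exp ((s + r) • a₀) (x.2 r)) r)
          = NormedSpace.exp ((t + s) • a₀) x.1 + ∫ r, (Ioc (-s) 0).indicator F r := by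
        rw [map_add]
        congr 1
        · rw [expB_add, ContinuousLinearMap.mul_apply]
        · rw [← ContinuousLinearMap.integral_comp_comm _ hIs]
          have hpt : ∀ r : ℝ, NormedSpace.exp (t • a₀) ((Icc (-s) 0).indicator
              (fun r => NormedSpace.exp ((s + r) • a₀) (x.2 r)) r)
              = (Icc (-s) 0).indicator F r := by
            intro r
            rw [clm_ind]
            by_cases h : r ∈ Icc (-s) 0
            · rw [indicator_of_mem h, indicator_of_mem h]
              simp only [hF_def]
              have h2 : t + s + r = t + (s + r) := by ring
              rw [h2, expB_add a₀ t (s + r), ContinuousLinearMap.mul_apply]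
            · rw [indicator_of_notMem h, indicator_of_notMem h]
          simp only [hpt]
          rw [← integral_indicator measurableSet_Ioc]
          simp only [indicator_indicator]
          exact red F _ _ _ (aeq2 _ _ _ (by linarith))
      have e3 : (∫ r in Ioc (-d) 0, (Icc (-t) 0).indicator
            (fun r => NormedSpace.exp ((t + r) • a₀)
              ((Icc (-d + s) 0).indicator (fun ξ => x.2 (ξ - s)) r)) r)
          = ∫ r, (Ioc (-(t + s)) (-s)).indicator F r := by
        have hsub : Icc (-t) (0:ℝ) ⊆ Icc (-d + s) 0 := Icc_subset_Icc (by linarith) le_rfl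
        have hpt : ∀ r : ℝ, (Icc (-t) 0).indicator
            (fun r => NormedSpace.exp ((t + r) • a₀)
              ((Icc (-d + s) 0).indicator (fun ξ => x.2 (ξ - s)) r)) r
            = (Icc (-t) 0).indicator
              (fun r => NormedSpace.exp ((t + r) • a₀) (x.2 (r - s))) r := by
          intro r
          by_cases h : r ∈ Icc (-t) 0
          · rw [indicator_of_mem h, indicator_of_mem h, indicator_of_mem (hsub h)]
          · rw [indicator_of_notMem h, indicator_of_notMem h]
        simp only [hpt]
        rw [← integral_indicator measurableSet_Ioc]
        simp only [indicator_indicator]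
        rw [← integral_add_right_eq_self (fun r => (Ioc (-d) 0 ∩ Icc (-t) 0).indicator
              (fun r => NormedSpace.exp ((t + r) • a₀) (x.2 (r - s))) r) s]
        have hpt2 : ∀ u : ℝ, (Ioc (-d) 0 ∩ Icc (-t) 0).indicator
              (fun r => NormedSpace.exp ((t + r) • a₀) (x.2 (r - s))) (u + s)
            = (Ioc (-d - s) (-s) ∩ Icc (-(t + s)) (-s)).indicator F u := by
          intro u
          by_cases h : u ∈ Ioc (-d - s) (-s) ∩ Icc (-(t + s)) (-s)
          · have h' : u + s ∈ Ioc (-d) 0 ∩ Icc (-t) 0 := by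
              obtain ⟨⟨u1, u2⟩, u3, u4⟩ := h
              exact ⟨⟨by linarith, by linarith⟩, ⟨by linarith, by linarith⟩⟩
            rw [indicator_of_mem h', indicator_of_mem h]
            simp only [hF_def]
            have h1 : t + (u + s) = t + s + u := by ring
            have h2 : u + s - s = u := by ring
            rw [h1, h2]
          · have h' : u + s ∉ Ioc (-d) 0 ∩ Icc (-t) 0 := by
              intro hc
              obtain ⟨⟨u1, u2⟩, u3, u4⟩ := hc
              exact h ⟨⟨by linarith, by linarith⟩, ⟨by linarith, by linarith⟩⟩
            rw [indicator_of_notMem h', indicator_of_notMem h]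
        simp only [hpt2]
        exact red F _ _ _ (aeq2 _ _ _ (by linarith))
      have hi1 : Integrable ((Ioc (-(t + s)) (-s)).indicator F) volume :=
        (integrable_indicator_iff measurableSet_Ioc).2
          (hF.mono_measure (Measure.restrict_mono
            (Ioc_subset_Ioc (by linarith) (by linarith)) le_rfl))
      have hi2 : Integrable ((Ioc (-s) 0).indicator F) volume :=
        (integrable_indicator_iff measurableSet_Ioc).2
          (hF.mono_measure (Measure.restrict_mono
            (Ioc_subset_Ioc (by linarith) le_rfl) le_rfl))
      have e4 : (∫ r, (Ioc (-(t + s)) 0).indicator F r)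
          = (∫ r, (Ioc (-(t + s)) (-s)).indicator F r)
            + ∫ r, (Ioc (-s) 0).indicator F r := by
        have hu : Ioc (-(t + s)) (-s) ∪ Ioc (-s) 0 = Ioc (-(t + s)) (0:ℝ) :=
          Ioc_union_Ioc_eq_Ioc (by linarith) (by linarith)
        rw [← hu]
        simp only [indicator_union_of_disjoint (Ioc_disjoint_Ioc_of_le le_rfl), Pi.add_apply]
        exact integral_add hi1 hi2
      rw [e1, e2, e3, e4]
      abel
    · -- second component
      funext ξ
      simp only [indicator_apply, mem_Icc]
      by_cases h1 : -d + (t + s) ≤ ξ ∧ ξ ≤ 0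
      · rw [if_pos h1, if_pos (show -d + t ≤ ξ ∧ ξ ≤ 0 from ⟨by linarith [h1.1], h1.2⟩),
          if_pos (show -d + s ≤ ξ - t ∧ ξ - t ≤ 0 from
            ⟨by linarith [h1.1], by linarith [h1.2]⟩)]
        have h2 : ξ - (t + s) = ξ - t - s := by ring
        rw [h2]
      · rw [if_neg h1]
        by_cases h2 : -d + t ≤ ξ ∧ ξ ≤ 0
        · have h3 : ¬(-d + s ≤ ξ - t ∧ ξ - t ≤ 0) := fun hc => h1 ⟨by linarith [hc.1], h2.2⟩
          rw [if_pos h2, if_neg h3]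
        · rw [if_neg h2]
end
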